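/- Let (Ω, 𝓕, P) be a probability space, d ≥ 1, E = EuclideanSpace ℝ (Fin d). For each n ≥ 2 let w^{(n)} : Fin n → ℝ satisfy ∑_i w^{(n)} i = 0 and ∑_i (w^{(n)} i)² = 1, and let ζ_{n,i} : Ω → E (for i ∈ Fin n) and ζ_i : Ω → E be square-integrable random vectors such that, for each n: E‖ζ_{n,i} − ζ_i‖² = E‖ζ_{n,0} − ζ_0‖² for every i ∈ Fin n, and E⟨ζ_{n,i} − ζ_i, ζ_{n,j} − ζ_j⟩ = E⟨ζ_{n,0} − ζ_0, ζ_{n,1} − ζ_1⟩ for all i ≠ j in Fin n. If ζ_{n,0} → ζ_0 almost surely as n → ∞ and E‖ζ_{n,0}‖² → E‖ζ_0‖² < ∞, then E‖∑_{i ∈ Fin n} w^{(n)} i • (ζ_{n,i} − ζ_i)‖² → 0 as n → ∞. -/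

import Mathlib

open MeasureTheory Filter
open scoped RealInnerProductSpace Topology BigOperators

lemma sq_norm_sub_le' {E : Type*} [NormedAddCommGroup E] (x y : E) :
    ‖x - y‖ ^ 2 ≤ 2 * ‖x‖ ^ 2 + 2 * ‖y‖ ^ 2 := by
  have h := norm_sub_le x y
  have h2 : ‖x - y‖ ^ 2 ≤ (‖x‖ + ‖y‖) ^ 2 := pow_le_pow_left₀ (norm_nonneg _) h 2
  nlinarith [sq_nonneg (‖x‖ - ‖y‖)]

lemma scheffe_L2 {Ω : Type*} [MeasurableSpace Ω] {P : Measure Ω}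
    {E : Type*} [NormedAddCommGroup E]
    (g : Ω → E) (gn : ℕ → Ω → E)
    (hgn : ∀ n, MemLp (gn n) 2 P) (hg : MemLp g 2 P)
    (has : ∀ᵐ ω ∂P, Tendsto (fun n => gn n ω) atTop (𝓝 (g ω)))
    (hmom : Tendsto (fun n => ∫ ω, ‖gn n ω‖ ^ 2 ∂P) atTop (𝓝 (∫ ω, ‖g ω‖ ^ 2 ∂P))) :
    Tendsto (fun n => ∫ ω, ‖gn n ω - g ω‖ ^ 2 ∂P) atTop (𝓝 0) := by
  set M : ℝ := ∫ ω, ‖g ω‖ ^ 2 ∂P with hM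
  have hIg : Integrable (fun ω => ‖g ω‖ ^ 2) P := (memLp_two_iff_integrable_sq_norm hg.1).1 hg
  have hIgn : ∀ n, Integrable (fun ω => ‖gn n ω‖ ^ 2) P :=
    fun n => (memLp_two_iff_integrable_sq_norm (hgn n).1).1 (hgn n)
  have hIf : ∀ n, Integrable (fun ω => ‖gn n ω - g ω‖ ^ 2) P := fun n =>
    (memLp_two_iff_integrable_sq_norm ((hgn n).sub hg).1).1 ((hgn n).sub hg)
  have hIu : ∀ n, Integrable (fun ω => 2 * ‖gn n ω‖ ^ 2 + 2 * ‖g ω‖ ^ 2) P :=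
    fun n => ((hIgn n).const_mul 2).add (hIg.const_mul 2)
  set A : ℕ → ℝ := fun n => ∫ ω, (2 * ‖gn n ω‖ ^ 2 + 2 * ‖g ω‖ ^ 2) ∂P with hA_def
  set b : ℕ → ℝ := fun n => ∫ ω, ‖gn n ω - g ω‖ ^ 2 ∂P with hb_def
  have hAeq : ∀ n, A n = 2 * (∫ ω, ‖gn n ω‖ ^ 2 ∂P) + 2 * M := by
    intro n
    simp only [hA_def]
    rw [integral_add ((hIgn n).const_mul 2) (hIg.const_mul 2), integral_const_mul 2 _,
      integral_const_mul 2 _]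
  have hA : Tendsto A atTop (𝓝 (4 * M)) := by
    have h1 : Tendsto (fun n => 2 * (∫ ω, ‖gn n ω‖ ^ 2 ∂P) + 2 * M) atTop
        (𝓝 (2 * M + 2 * M)) := (hmom.const_mul 2).add tendsto_const_nhds
    rw [show (4 : ℝ) * M = 2 * M + 2 * M by ring]
    exact Tendsto.congr (fun n => (hAeq n).symm) h1
  have hb0 : ∀ n, 0 ≤ b n := fun n => integral_nonneg fun ω => sq_nonneg _
  have hbA : ∀ n, b n ≤ A n := fun n =>
    integral_mono (hIf n) (hIu n) fun ω => sq_norm_sub_le' _ _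
  -- boundedness facts
  obtain ⟨C, hC⟩ : ∃ C, ∀ᶠ n in atTop, A n ≤ C := by
    rcases hA.isBoundedUnder_le with ⟨C, hC⟩
    exact ⟨C, eventually_map.1 hC⟩
  have hbbd_above : IsBoundedUnder (· ≤ ·) atTop b :=
    ⟨C, eventually_map.2 (hC.mono fun n hn => (hbA n).trans hn)⟩
  have hbbd_below : IsBoundedUnder (· ≥ ·) atTop b :=
    ⟨0, eventually_map.2 (Eventually.of_forall hb0)⟩
  set x : ℕ → ℝ := fun n => A n - b n with hx_def
  have hx0 : ∀ n, 0 ≤ x n := fun n => sub_nonneg.2 (hbA n)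
  have hxbd_above : IsBoundedUnder (· ≤ ·) atTop x :=
    ⟨C, eventually_map.2 (hC.mono fun n hn => le_trans (by simp [hx_def]; linarith [hb0 n]) hn)⟩
  have hxbd_below : IsBoundedUnder (· ≥ ·) atTop x :=
    ⟨0, eventually_map.2 (Eventually.of_forall hx0)⟩
  -- Fatou
  have hmeas : ∀ n, AEMeasurable (fun ω =>
      ENNReal.ofReal ((2 * ‖gn n ω‖ ^ 2 + 2 * ‖g ω‖ ^ 2) - ‖gn n ω - g ω‖ ^ 2)) P :=
    fun n => ENNReal.measurable_ofReal.comp_aemeasurable ((hIu n).sub (hIf n)).aemeasurable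
  have fatou := lintegral_liminf_le' (u := atTop) hmeas
  have hRHS : ∀ n, (∫⁻ ω, ENNReal.ofReal
      ((2 * ‖gn n ω‖ ^ 2 + 2 * ‖g ω‖ ^ 2) - ‖gn n ω - g ω‖ ^ 2) ∂P) = ENNReal.ofReal (x n) := by
    intro n
    have hint : Integrable
        (fun ω => (2 * ‖gn n ω‖ ^ 2 + 2 * ‖g ω‖ ^ 2) - ‖gn n ω - g ω‖ ^ 2) P :=
      (hIu n).sub (hIf n)
    rw [← ofReal_integral_eq_lintegral_ofReal hint
      (ae_of_all _ fun ω => sub_nonneg.2 (sq_norm_sub_le' _ _))]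
    congr 1
    rw [integral_sub (hIu n) (hIf n)]
  have hLHS : (∫⁻ ω, Filter.liminf (fun n => ENNReal.ofReal
      ((2 * ‖gn n ω‖ ^ 2 + 2 * ‖g ω‖ ^ 2) - ‖gn n ω - g ω‖ ^ 2)) atTop ∂P)
      = ENNReal.ofReal (4 * M) := by
    have step1 : ∀ᵐ ω ∂P, Filter.liminf (fun n => ENNReal.ofReal
        ((2 * ‖gn n ω‖ ^ 2 + 2 * ‖g ω‖ ^ 2) - ‖gn n ω - g ω‖ ^ 2)) atTop
        = ENNReal.ofReal (4 * ‖g ω‖ ^ 2) := by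
      filter_upwards [has] with ω hω
      have hn : Tendsto (fun n => ‖gn n ω‖) atTop (𝓝 ‖g ω‖) := hω.norm
      have hs : Tendsto (fun n => ‖gn n ω - g ω‖) atTop (𝓝 0) := by
        have := (hω.sub (tendsto_const_nhds (x := g ω))).norm
        simpa using this
      have h1 : Tendsto (fun n => (2 * ‖gn n ω‖ ^ 2 + 2 * ‖g ω‖ ^ 2) - ‖gn n ω - g ω‖ ^ 2)
          atTop (𝓝 (4 * ‖g ω‖ ^ 2)) := by
        have := (((hn.pow 2).const_mul 2).add
          (tendsto_const_nhds (x := 2 * ‖g ω‖ ^ 2))).sub (hs.pow 2)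
        rw [show (4 : ℝ) * ‖g ω‖ ^ 2 = (2 * ‖g ω‖ ^ 2 + 2 * ‖g ω‖ ^ 2) - 0 ^ 2 by ring]
        exact this
      exact (Tendsto.comp (ENNReal.continuous_ofReal.tendsto _) h1).liminf_eq
    rw [lintegral_congr_ae step1,
      ← ofReal_integral_eq_lintegral_ofReal (hIg.const_mul 4)
        (ae_of_all _ fun ω => by positivity)]
    rw [integral_const_mul 4]
  rw [hLHS] at fatou
  simp only [hRHS] at fatou
  -- convert liminf of ofReal to ofReal of liminf
  have hmono : Monotone ENNReal.ofReal := fun _ _ h => ENNReal.ofReal_le_ofReal h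
  have hcob : IsCoboundedUnder (· ≥ ·) atTop x := hxbd_above.isCoboundedUnder_ge
  have hmap := hmono.map_liminf_of_continuousAt (F := atTop) x
    ENNReal.continuous_ofReal.continuousAt hcob hxbd_below
  rw [show ((fun n => ENNReal.ofReal (x n)) = ENNReal.ofReal ∘ x) from rfl, ← hmap] at fatou
  have hliminf_x_nonneg : (0 : ℝ) ≤ liminf x atTop :=
    le_liminf_of_le hcob (Eventually.of_forall hx0)
  have hkey : 4 * M ≤ liminf x atTop :=
    (ENNReal.ofReal_le_ofReal_iff hliminf_x_nonneg).1 fatou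
  -- liminf x ≤ limsup A + liminf (-b) = 4M - limsup b
  have hnegb_bd_below : IsBoundedUnder (· ≥ ·) atTop (fun n => -b n) :=
    ⟨-C, eventually_map.2 (hC.mono fun n hn => by
      have := (hbA n).trans hn; simp; linarith)⟩
  have hnegb_cob : IsCoboundedUnder (· ≥ ·) atTop (fun n => -b n) :=
    IsBoundedUnder.isCoboundedUnder_ge ⟨0, eventually_map.2
      (Eventually.of_forall fun n => by simpa using hb0 n)⟩
  have hsplit : liminf x atTop ≤ limsup A atTop + liminf (fun n => -b n) atTop := by
    have := liminf_add_le (f := atTop) (u := A) (v := fun n => -b n)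
      hA.isBoundedUnder_ge hA.isBoundedUnder_le hnegb_bd_below hnegb_cob
    have hxeq : x = A + fun n => -b n := by
      funext n; simp [hx_def, sub_eq_add_neg]
    rw [hxeq]
    exact this
  have hlimsupA : limsup A atTop = 4 * M := hA.limsup_eq
  have hcobb : IsCoboundedUnder (· ≤ ·) atTop b := hbbd_below.isCoboundedUnder_le
  have hnegmap : -(limsup b atTop) = liminf (fun n => -b n) atTop := by
    have hanti : Antitone (fun r : ℝ => -r) := fun _ _ h => neg_le_neg h
    have := hanti.map_limsup_of_continuousAt (F := atTop) b
      (continuous_neg.continuousAt) hbbd_above hcobb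
    exact this
  have hlimsup_b_le : limsup b atTop ≤ 0 := by
    rw [hlimsupA, ← hnegmap] at hsplit
    linarith [hkey.trans hsplit]
  exact tendsto_of_le_liminf_of_limsup_le
    (le_liminf_of_le hbbd_above.isCoboundedUnder_ge (Eventually.of_forall hb0))
    hlimsup_b_le hbbd_above hbbd_below

lemma norm_sq_sum_smul' {d m : ℕ} (w : Fin m → ℝ) (v : Fin m → EuclideanSpace ℝ (Fin d)) :
    ‖∑ i, w i • v i‖ ^ 2 = ∑ i, ∑ j, (w i * w j) * ⟪v i, v j⟫ := by
  rw [← real_inner_self_eq_norm_sq, sum_inner]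
  refine Finset.sum_congr rfl fun i _ => ?_
  rw [inner_sum]
  refine Finset.sum_congr rfl fun j _ => ?_
  rw [real_inner_smul_left, real_inner_smul_right]; ring

/-- Abstract form of the Hájek asymptotic representation (Proposition 3.1(i)): for a
triangular array of approximate scores `ζn n i` and exact scores `ζ i` with exchangeable
second moments of the differences, centered normalized weights, a.s. convergence of
`ζn n 0` to `ζ 0` and convergence of second moments, the weighted sum of differences
converges to zero in quadratic mean. (The sample size is parametrized as `n + 2 ≥ 2`.) -/
theorem hajek_representation_quadratic_mean
    {Ω : Type*} [MeasurableSpace Ω] (P : Measure Ω) [IsProbabilityMeasure P]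
    {d : ℕ} (hd : 1 ≤ d)
    (w : (n : ℕ) → Fin (n + 2) → ℝ)
    (ζn : (n : ℕ) → Fin (n + 2) → Ω → EuclideanSpace ℝ (Fin d))
    (ζ : ℕ → Ω → EuclideanSpace ℝ (Fin d))
    (hw0 : ∀ n, ∑ i, w n i = 0) (hw2 : ∀ n, ∑ i, (w n i) ^ 2 = 1)
    (hζn : ∀ n i, MemLp (ζn n i) 2 P) (hζ : ∀ i, MemLp (ζ i) 2 P)
    (hnorm : ∀ n, ∀ i : Fin (n + 2),
      ∫ ω, ‖ζn n i ω - ζ (i : ℕ) ω‖ ^ 2 ∂P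
        = ∫ ω, ‖ζn n 0 ω - ζ 0 ω‖ ^ 2 ∂P)
    (hcross : ∀ n, ∀ i j : Fin (n + 2), i ≠ j →
      ∫ ω, ⟪ζn n i ω - ζ (i : ℕ) ω, ζn n j ω - ζ (j : ℕ) ω⟫ ∂P
        = ∫ ω, ⟪ζn n 0 ω - ζ 0 ω, ζn n 1 ω - ζ 1 ω⟫ ∂P)
    (has : ∀ᵐ ω ∂P, Tendsto (fun n => ζn n 0 ω) atTop (𝓝 (ζ 0 ω)))
    (hmom : Tendsto (fun n => ∫ ω, ‖ζn n 0 ω‖ ^ 2 ∂P) atTop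
      (𝓝 (∫ ω, ‖ζ 0 ω‖ ^ 2 ∂P))) :
    Tendsto
      (fun n => ∫ ω, ‖∑ i : Fin (n + 2), w n i • (ζn n i ω - ζ (i : ℕ) ω)‖ ^ 2 ∂P)
      atTop (𝓝 0) := by
  -- notation for differences
  have hD : ∀ n (i : Fin (n + 2)),
      MemLp (fun ω => ζn n i ω - ζ (i : ℕ) ω) 2 P :=
    fun n i => (hζn n i).sub (hζ (i : ℕ))
  have hIsq : ∀ n (i : Fin (n + 2)),
      Integrable (fun ω => ‖ζn n i ω - ζ (i : ℕ) ω‖ ^ 2) P :=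
    fun n i => (memLp_two_iff_integrable_sq_norm (hD n i).1).1 (hD n i)
  have hInner : ∀ n (i j : Fin (n + 2)),
      Integrable (fun ω => ⟪ζn n i ω - ζ (i : ℕ) ω, ζn n j ω - ζ (j : ℕ) ω⟫) P := by
    intro n i j
    refine Integrable.mono' (((hIsq n i).add (hIsq n j)).div_const 2)
      ((hD n i).1.inner (hD n j).1) (Eventually.of_forall fun ω => ?_)
    have h1 := abs_real_inner_le_norm (ζn n i ω - ζ (i : ℕ) ω) (ζn n j ω - ζ (j : ℕ) ω)
    have h2 : ‖ζn n i ω - ζ (i : ℕ) ω‖ * ‖ζn n j ω - ζ (j : ℕ) ω‖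
        ≤ (‖ζn n i ω - ζ (i : ℕ) ω‖ ^ 2 + ‖ζn n j ω - ζ (j : ℕ) ω‖ ^ 2) / 2 := by
      nlinarith [sq_nonneg (‖ζn n i ω - ζ (i : ℕ) ω‖ - ‖ζn n j ω - ζ (j : ℕ) ω‖)]
    calc ‖⟪ζn n i ω - ζ (i : ℕ) ω, ζn n j ω - ζ (j : ℕ) ω⟫‖
        = |⟪ζn n i ω - ζ (i : ℕ) ω, ζn n j ω - ζ (j : ℕ) ω⟫| := Real.norm_eq_abs _
      _ ≤ _ := h1.trans h2
  -- the two basic integrals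
  set a : ℕ → ℝ := fun n => ∫ ω, ‖ζn n 0 ω - ζ 0 ω‖ ^ 2 ∂P with ha_def
  set c : ℕ → ℝ := fun n => ∫ ω, ⟪ζn n 0 ω - ζ 0 ω, ζn n 1 ω - ζ 1 ω⟫ ∂P with hc_def
  -- key identity
  have key : ∀ n, (∫ ω, ‖∑ i : Fin (n + 2), w n i • (ζn n i ω - ζ (i : ℕ) ω)‖ ^ 2 ∂P)
      = a n - c n := by
    intro n
    have h1 : (∫ ω, ‖∑ i : Fin (n + 2), w n i • (ζn n i ω - ζ (i : ℕ) ω)‖ ^ 2 ∂P)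
        = ∑ i : Fin (n + 2), ∑ j : Fin (n + 2), (w n i * w n j) *
            ∫ ω, ⟪ζn n i ω - ζ (i : ℕ) ω, ζn n j ω - ζ (j : ℕ) ω⟫ ∂P := by
      calc (∫ ω, ‖∑ i : Fin (n + 2), w n i • (ζn n i ω - ζ (i : ℕ) ω)‖ ^ 2 ∂P)
          = ∫ ω, ∑ i : Fin (n + 2), ∑ j : Fin (n + 2), (w n i * w n j) *
              ⟪ζn n i ω - ζ (i : ℕ) ω, ζn n j ω - ζ (j : ℕ) ω⟫ ∂P := by
            refine integral_congr_ae (Eventually.of_forall fun ω => ?_)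
            exact norm_sq_sum_smul' (w n) (fun i => ζn n i ω - ζ (i : ℕ) ω)
        _ = _ := by
            rw [integral_finset_sum _ (fun i _ => integrable_finset_sum _
              (fun j _ => (hInner n i j).const_mul _))]
            refine Finset.sum_congr rfl fun i _ => ?_
            rw [integral_finset_sum _ (fun j _ => (hInner n i j).const_mul _)]
            exact Finset.sum_congr rfl fun j _ => integral_const_mul _ _
    have hIij : ∀ i j : Fin (n + 2),
        (∫ ω, ⟪ζn n i ω - ζ (i : ℕ) ω, ζn n j ω - ζ (j : ℕ) ω⟫ ∂P)
          = if i = j then a n else c n := by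
      intro i j
      by_cases hij : i = j
      · subst hij
        rw [if_pos rfl, ha_def]
        calc (∫ ω, ⟪ζn n i ω - ζ (i : ℕ) ω, ζn n i ω - ζ (i : ℕ) ω⟫ ∂P)
            = ∫ ω, ‖ζn n i ω - ζ (i : ℕ) ω‖ ^ 2 ∂P :=
              integral_congr_ae (Eventually.of_forall fun ω =>
                real_inner_self_eq_norm_sq _)
          _ = _ := hnorm n i
      · rw [if_neg hij, hc_def]
        exact hcross n i j hij
    rw [h1]
    calc ∑ i : Fin (n + 2), ∑ j : Fin (n + 2), (w n i * w n j) *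
          ∫ ω, ⟪ζn n i ω - ζ (i : ℕ) ω, ζn n j ω - ζ (j : ℕ) ω⟫ ∂P
        = ∑ i : Fin (n + 2), ∑ j : Fin (n + 2),
            ((w n i * w n j) * c n + (if j = i then (w n i) ^ 2 * (a n - c n) else 0)) := by
          refine Finset.sum_congr rfl fun i _ => Finset.sum_congr rfl fun j _ => ?_
          rw [hIij i j]
          by_cases hij : i = j
          · subst hij; rw [if_pos rfl, if_pos rfl]; ring
          · rw [if_neg hij, if_neg (fun h => hij h.symm), add_zero]
      _ = (∑ i : Fin (n + 2), ∑ j : Fin (n + 2), (w n i * w n j) * c n)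
          + ∑ i : Fin (n + 2), (w n i) ^ 2 * (a n - c n) := by
          rw [← Finset.sum_add_distrib]
          refine Finset.sum_congr rfl fun i _ => ?_
          rw [Finset.sum_add_distrib, Finset.sum_ite_eq' Finset.univ i
            (fun _ => (w n i) ^ 2 * (a n - c n)), if_pos (Finset.mem_univ i)]
      _ = a n - c n := by
          have h2 : ∑ i : Fin (n + 2), ∑ j : Fin (n + 2), (w n i * w n j) * c n = 0 := by
            calc ∑ i : Fin (n + 2), ∑ j : Fin (n + 2), (w n i * w n j) * c n
                = ∑ i : Fin (n + 2), w n i * ∑ j : Fin (n + 2), w n j * c n := by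
                  refine Finset.sum_congr rfl fun i _ => ?_
                  rw [Finset.mul_sum]
                  exact Finset.sum_congr rfl fun j _ => by ring
              _ = (∑ i : Fin (n + 2), w n i) * ∑ j : Fin (n + 2), w n j * c n :=
                  (Finset.sum_mul _ _ _).symm
              _ = 0 := by rw [hw0 n, zero_mul]
          have h3 : ∑ i : Fin (n + 2), (w n i) ^ 2 * (a n - c n) = a n - c n := by
            rw [← Finset.sum_mul, hw2 n, one_mul]
          rw [h2, h3, zero_add]
  -- Cauchy–Schwarz type bound
  have hca : ∀ n, |c n| ≤ a n := by
    intro n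
    have h1 : |c n| ≤ ∫ ω,
        (‖ζn n 0 ω - ζ ((0 : Fin (n + 2)) : ℕ) ω‖ ^ 2
          + ‖ζn n 1 ω - ζ ((1 : Fin (n + 2)) : ℕ) ω‖ ^ 2) / 2 ∂P := by
      rw [hc_def, ← Real.norm_eq_abs]
      refine (norm_integral_le_integral_norm _).trans ?_
      refine integral_mono ((hInner n 0 1).norm) (((hIsq n 0).add (hIsq n 1)).div_const 2)
        fun ω => ?_
      have h1 := abs_real_inner_le_norm (ζn n 0 ω - ζ ((0 : Fin (n + 2)) : ℕ) ω)
        (ζn n 1 ω - ζ ((1 : Fin (n + 2)) : ℕ) ω)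
      have h2 : ‖ζn n 0 ω - ζ ((0 : Fin (n + 2)) : ℕ) ω‖ * ‖ζn n 1 ω - ζ ((1 : Fin (n + 2)) : ℕ) ω‖
          ≤ (‖ζn n 0 ω - ζ ((0 : Fin (n + 2)) : ℕ) ω‖ ^ 2
            + ‖ζn n 1 ω - ζ ((1 : Fin (n + 2)) : ℕ) ω‖ ^ 2) / 2 := by
        nlinarith [sq_nonneg (‖ζn n 0 ω - ζ ((0 : Fin (n + 2)) : ℕ) ω‖
          - ‖ζn n 1 ω - ζ ((1 : Fin (n + 2)) : ℕ) ω‖)]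
      simp only [Real.norm_eq_abs, Fin.val_zero, Fin.val_one] at *
      exact h1.trans h2
    have h2 : (∫ ω, (‖ζn n 0 ω - ζ ((0 : Fin (n + 2)) : ℕ) ω‖ ^ 2
        + ‖ζn n 1 ω - ζ ((1 : Fin (n + 2)) : ℕ) ω‖ ^ 2) / 2 ∂P) = a n := by
      rw [integral_div, integral_add (hIsq n 0) (hIsq n 1), hnorm n 0, hnorm n 1, ha_def]
      ring
    exact h1.trans_eq h2
  -- convergence of a n
  have ha0 : Tendsto a atTop (𝓝 0) := by
    have := scheffe_L2 (P := P) (ζ 0) (fun n => ζn n 0) (fun n => hζn n 0) (hζ 0) has hmom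
    simpa [ha_def] using this
  refine squeeze_zero (fun n => integral_nonneg fun ω => sq_nonneg _)
    (fun n => ?_) (by simpa using ha0.const_mul 2)
  rw [key n]
  have := hca n
  have := abs_nonneg (c n)
  have h := neg_abs_le (c n)
  linarith
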